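/- Let v, v₋, v₊ ∈ ℤ² with v₋ × v = 1, v × v₊ = 1, v = v₋ + v₊, |v₋| < |v|, |v₊| < |v|. Suppose v₋' ∈ ℤ² also satisfies v₋' × v = 1 and |v₋'| < |v|, and the angle from v₋' to v is strictly between 0 and π. Then v₋' = v₋ or v₋' = −v₊. -/

import Mathlib

/-- Cross product on ℤ²: (a,b) × (c,d) = ad − bc. -/
def cross (v w : ℤ × ℤ) : ℤ := v.1 * w.2 - v.2 * w.1

/-- Euclidean norm of a vector in ℤ². -/
noncomputable def euclNorm (v : ℤ × ℤ) : ℝ := Real.sqrt ((v.1 : ℝ) ^ 2 + (v.2 : ℝ) ^ 2)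

lemma enorm_lt_sq {a b : ℤ × ℤ} (h : euclNorm a < euclNorm b) :
    a.1 ^ 2 + a.2 ^ 2 < b.1 ^ 2 + b.2 ^ 2 := by
  by_contra hc
  push_neg at hc
  have hle : ((b.1 : ℝ) ^ 2 + (b.2 : ℝ) ^ 2) ≤ ((a.1 : ℝ) ^ 2 + (a.2 : ℝ) ^ 2) := by
    exact_mod_cast hc
  have := Real.sqrt_le_sqrt hle
  unfold euclNorm at h
  linarith

/-- Uniqueness step of Pick's theorem: if `v₋ × v = 1`, `v × v₊ = 1`, `v = v₋ + v₊`,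
`|v₋| < |v|`, `|v₊| < |v|`, and `v₋'` also satisfies `v₋' × v = 1`, `|v₋'| < |v|`, with the
angle from `v₋'` to `v` strictly between `0` and `π` (i.e. `v₋' × v > 0`), then
`v₋' = v₋` or `v₋' = −v₊`. -/
theorem pick_uniqueness (v vm vp vm' : ℤ × ℤ)
    (h1 : cross vm v = 1) (h2 : cross v vp = 1) (h3 : v = vm + vp)
    (h4 : euclNorm vm < euclNorm v) (h5 : euclNorm vp < euclNorm v)
    (h6 : cross vm' v = 1) (h7 : euclNorm vm' < euclNorm v)
    (hang : 0 < cross vm' v) :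
    vm' = vm ∨ vm' = -vp := by
  unfold cross at h1 h2 h6
  have hN4 := enorm_lt_sq h4
  have hN5 := enorm_lt_sq h5
  have hN7 := enorm_lt_sq h7
  -- vp = v - vm
  have hvp1 : vp.1 = v.1 - vm.1 := by
    have := congrArg Prod.fst h3; simp [Prod.fst_add] at this; omega
  have hvp2 : vp.2 = v.2 - vm.2 := by
    have := congrArg Prod.snd h3; simp [Prod.snd_add] at this; omega
  obtain ⟨k, e1, e2⟩ : ∃ k : ℤ, vm'.1 = vm.1 + k * v.1 ∧ vm'.2 = vm.2 + k * v.2 :=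
    ⟨vm.1 * vm'.2 - vm.2 * vm'.1,
      by linear_combination vm.1 * h6 - vm'.1 * h1,
      by linear_combination vm.2 * h6 - vm'.2 * h1⟩
  obtain ⟨D, hD⟩ : ∃ D : ℤ, D = vm.1 * v.1 + vm.2 * v.2 := ⟨_, rfl⟩
  obtain ⟨Nv, hNv⟩ : ∃ N : ℤ, N = v.1 ^ 2 + v.2 ^ 2 := ⟨_, rfl⟩
  obtain ⟨Nm, hNm⟩ : ∃ N : ℤ, N = vm.1 ^ 2 + vm.2 ^ 2 := ⟨_, rfl⟩
  have lag : D ^ 2 + 1 = Nm * Nv := by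
    rw [hD, hNv, hNm]; linear_combination (-(vm.1 * v.2) + vm.2 * v.1 - 1) * h1
  have hNm0 : 0 ≤ Nm := by rw [hNm]; positivity
  have hNv0 : 0 ≤ Nv := by rw [hNv]; positivity
  have hNm1 : 1 ≤ Nm := by nlinarith [sq_nonneg D]
  have hNv1 : 1 ≤ Nv := by nlinarith [sq_nonneg D]
  have hN4' : Nm < Nv := by rw [hNm, hNv]; exact hN4
  have hDpos : 0 < D := by
    rw [hvp1, hvp2] at hN5
    have h5' : Nm - 2 * D < 0 := by rw [hNm, hD, hNv] at *; linarith [hN5]; 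
    linarith
  have hN7' : Nm + 2 * k * D + k ^ 2 * Nv < Nv := by
    rw [e1, e2] at hN7
    calc Nm + 2 * k * D + k ^ 2 * Nv
        = (vm.1 + k * v.1) ^ 2 + (vm.2 + k * v.2) ^ 2 := by rw [hNm, hD, hNv]; ring
      _ < v.1 ^ 2 + v.2 ^ 2 := hN7
      _ = Nv := hNv.symm
  clear h1 h2 h3 h4 h5 h6 h7 hang hN4 hN5 hN7 hD hNv hNm
  have hDlt : D < Nv := by nlinarith [sq_nonneg (D - Nv)]
  have hk0 : k ≤ 0 := by
    by_contra hc
    push_neg at hc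
    have hk1 : 1 ≤ k := hc
    have p1 : 1 * D ≤ k * D := mul_le_mul_of_nonneg_right hk1 hDpos.le
    have p2 : 1 * Nv ≤ (k * k) * Nv :=
      mul_le_mul_of_nonneg_right (by nlinarith : (1:ℤ) ≤ k * k) hNv0
    nlinarith [p1, p2]
  have hk1 : -1 ≤ k := by
    by_contra hc
    push_neg at hc
    have hkle : k ≤ -2 := by omega
    have habs : D + k * Nv ≤ -Nv - 1 := by
      nlinarith [mul_le_mul_of_nonneg_right hkle hNv0]
    have hsq : (Nv + 1) ^ 2 ≤ (D + k * Nv) ^ 2 := by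
      nlinarith [sq_nonneg (D + k * Nv + Nv + 1)]
    nlinarith [mul_le_mul_of_nonneg_right hN7'.le hNv0]
  have hcase : k = 0 ∨ k = -1 := by omega
  rcases hcase with rfl | rfl
  · left
    exact Prod.ext (by omega) (by omega)
  · right
    refine Prod.ext ?_ ?_ <;> simp only [Prod.fst_neg, Prod.snd_neg] <;> omega
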